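/- Let K be a field of characteristic zero and F = K(x₁,…,x_ℓ). If f₁, …, f_p ∈ F \ K (p ≥ 2) satisfy c₁f₁ + ⋯ + c_pf_p = 0 for some constants (c₁, …, c_p) ∈ K^p not all zero, then ∂[dlog f₁ : ⋯ : dlog f_p] = 0. -/

import Mathlib

open ExteriorAlgebra MvPolynomial

set_option synthInstance.maxHeartbeats 1000000
set_option maxHeartbeats 1000000

noncomputable def wedgeList (F : Type*) {W : Type*} [Field F] [AddCommGroup W] [Module F W]
    (l : List W) : ExteriorAlgebra F W := (l.map (ι F)).prod

noncomputable def wedge (F : Type*) {W : Type*} [Field F] [AddCommGroup W] [Module F W]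
    {p : ℕ} (ω : Fin p → W) : ExteriorAlgebra F W := wedgeList F (List.ofFn ω)

noncomputable def der (F : Type*) {W : Type*} [Field F] [AddCommGroup W] [Module F W]
    {p : ℕ} (ω : Fin p → W) : ExteriorAlgebra F W :=
  ∑ k : Fin p, (-1 : F) ^ (k : ℕ) • wedgeList F ((List.ofFn ω).eraseIdx k)

/-- The field of rational functions `K(x₁, …, x_ℓ)`. -/
abbrev Fq (K : Type) [Field K] (ℓ : ℕ) : Type := FractionRing (MvPolynomial (Fin ℓ) K)

/-- `dlog f = df / f` with values in the module of Kähler differentials `Ω¹_{F/K}`. -/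
noncomputable def dlog (K : Type) [Field K] (ℓ : ℕ) (f : Fq K ℓ) : Ω[Fq K ℓ⁄K] :=
  f⁻¹ • KaehlerDifferential.D K (Fq K ℓ) f

section Aux

variable {F W : Type*} [Field F] [AddCommGroup W] [Module F W]

lemma wedgeList_cons (v : W) (l : List W) :
    wedgeList F (v :: l) = ι F v * wedgeList F l := by
  simp [wedgeList]

lemma eraseIdx_map {α β : Type*} (f : α → β) : ∀ (l : List α) (k : ℕ),
    (l.map f).eraseIdx k = (l.eraseIdx k).map f
  | [], _ => by simp
  | _ :: _, 0 => by simp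
  | a :: l, (k+1) => by simp [eraseIdx_map f l k]

open CliffordAlgebra in
lemma contract_wedgeList (φ : Module.Dual F W) (l : List W) (hφ : ∀ x ∈ l, φ x = 1) :
    contractLeft (Q := (0 : QuadraticForm F W)) φ (wedgeList F l) =
      ∑ k : Fin l.length, (-1 : F) ^ (k : ℕ) • wedgeList F (l.eraseIdx k) := by
  induction l with
  | nil => simp [wedgeList, contractLeft_one]
  | cons v t ih =>
    rw [wedgeList_cons, contractLeft_ι_mul, ih (fun x hx => hφ x (List.mem_cons_of_mem v hx)),
      hφ v List.mem_cons_self, one_smul, List.length_cons, Fin.sum_univ_succ]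
    simp only [Fin.val_zero, pow_zero, one_smul, List.eraseIdx_cons_zero, Fin.val_succ,
      List.eraseIdx_cons_succ]
    rw [Finset.mul_sum, sub_eq_add_neg, ← Finset.sum_neg_distrib]
    congr 1
    refine Finset.sum_congr rfl fun k _ => ?_
    rw [wedgeList_cons, mul_smul_comm, pow_succ, mul_comm ((-1 : F) ^ (k : ℕ)) (-1 : F),
      neg_one_mul, neg_smul]

lemma der_eq_zero_of_dependent {p : ℕ} (ω : Fin p → W) (a : Fin p → F) (j : Fin p)
    (haj : a j ≠ 0) (hsum : ∑ i, a i = 0) (hrel : ∑ i, a i • ω i = 0) :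
    der F ω = 0 := by
  classical
  set g : Fin p → W × F := fun i => (ω i, 1) with hg
  have hdep : ¬ LinearIndependent F g := by
    intro h
    refine haj (Fintype.linearIndependent_iff.mp h a ?_ j)
    have : ∀ i, a i • g i = (a i • ω i, a i) := fun i => by
      simp [hg, Prod.smul_mk]
    simp_rw [this]
    rw [Prod.ext_iff]
    constructor
    · rw [Prod.fst_sum]; simpa using hrel
    · rw [Prod.snd_sum]; simpa using hsum
  have h0 : wedgeList F (List.ofFn g) = 0 := by
    have : wedgeList F (List.ofFn g) = ιMulti F p g := by
      rw [ιMulti_apply, wedgeList, List.map_ofFn]; rfl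
    rw [this]
    exact (ιMulti F p).map_linearDependent g hdep
  set φ : Module.Dual F (W × F) := LinearMap.snd F W F with hφdef
  have hφ : ∀ x ∈ List.ofFn g, φ x = 1 := by
    intro x hx
    obtain ⟨i, rfl⟩ := List.mem_ofFn.mp hx
    simp [hφdef, hg]
  have hc := contract_wedgeList φ (List.ofFn g) hφ
  rw [h0, map_zero] at hc
  -- push both sums to sums over `Finset.range`
  have hcr : (0 : ExteriorAlgebra F (W × F)) =
      ∑ k ∈ Finset.range p, (-1 : F) ^ k • wedgeList F ((List.ofFn g).eraseIdx k) := by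
    rw [hc, Fin.sum_univ_eq_sum_range (fun k => (-1 : F) ^ k • wedgeList F ((List.ofFn g).eraseIdx k)), List.length_ofFn]
  -- project to W
  set π := map (R := F) (LinearMap.fst F W F) with hπ
  have hπw : ∀ l : List (W × F), π (wedgeList F l) = wedgeList F (l.map (LinearMap.fst F W F)) := by
    intro l
    rw [wedgeList, wedgeList, map_list_prod, List.map_map, List.map_map]
    congr 1
    ext x
    simp [hπ, map_apply_ι]
  have key := congrArg π hcr
  rw [map_zero, map_sum] at key
  have : der F ω = 0 := by
    rw [der, Fin.sum_univ_eq_sum_range (fun k => (-1 : F) ^ k • wedgeList F ((List.ofFn ω).eraseIdx k))]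
    rw [key]
    refine Finset.sum_congr rfl fun k _ => ?_
    rw [map_smul, hπw, ← eraseIdx_map, List.map_ofFn]
    rfl
  exact this

end Aux

/-- If `c₁ f₁ + ⋯ + c_p f_p = 0` for constants `c_i ∈ K` not all zero, then
`∂[dlog f₁ : ⋯ : dlog f_p] = 0`. -/
theorem der_dlog_eq_zero_of_linear_relation {K : Type} [Field K] [CharZero K] {ℓ : ℕ} {p : ℕ}
    (hp : 2 ≤ p) (f : Fin p → Fq K ℓ)
    (hf : ∀ i, f i ∉ Set.range (algebraMap K (Fq K ℓ)))
    (c : Fin p → K) (hc : c ≠ 0)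
    (hrel : (∑ i, algebraMap K (Fq K ℓ) (c i) * f i) = 0) :
    der (Fq K ℓ) (fun i => dlog K ℓ (f i)) = 0 := by
  set a : Fin p → Fq K ℓ := fun i => algebraMap K (Fq K ℓ) (c i) * f i with ha
  obtain ⟨j, hcj0⟩ := Function.ne_iff.mp hc
  have hcj : c j ≠ 0 := by simpa using hcj0
  have hfne : ∀ i, f i ≠ 0 := by
    intro i h
    exact hf i ⟨0, by rw [map_zero, h]⟩
  have haj : a j ≠ 0 :=
    mul_ne_zero ((map_ne_zero (algebraMap K (Fq K ℓ))).mpr hcj) (hfne j)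
  have hrel' : ∑ i, a i • dlog K ℓ (f i) = 0 := by
    have h1 : ∀ i, a i • dlog K ℓ (f i) = algebraMap K (Fq K ℓ) (c i) • KaehlerDifferential.D K (Fq K ℓ) (f i) := by
      intro i
      rw [dlog, smul_smul, ha]
      rw [mul_assoc, mul_inv_cancel₀ (hfne i), mul_one]
    simp_rw [h1]
    have h2 : ∀ i, algebraMap K (Fq K ℓ) (c i) • KaehlerDifferential.D K (Fq K ℓ) (f i)
        = KaehlerDifferential.D K (Fq K ℓ) (a i) := by
      intro i
      simp only [ha, Derivation.leibniz, Derivation.map_algebraMap, smul_zero, add_zero]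
    simp_rw [h2]
    rw [← map_sum, hrel, map_zero]
  exact der_eq_zero_of_dependent _ a j haj hrel hrel'
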